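/- Define the product of partitioned permutations (𝒱,π)·(𝒲,σ) := (𝒱 ∨ 𝒲, πσ) if |(𝒱,π)| + |(𝒲,σ)| = |(𝒱 ∨ 𝒲, πσ)| and 0 otherwise (in the formal linear span). This multiplication is associative: ((𝒱,π)·(𝒲,σ))·(𝒰,τ) = (𝒱,π)·((𝒲,σ)·(𝒰,τ)). -/

import Mathlib

open Equiv

def orbitSetoid {α : Type*} (π : Equiv.Perm α) : Setoid α where
  r := π.SameCycle
  iseqv := ⟨fun x => Equiv.Perm.SameCycle.refl π x, fun h => h.symm, fun h h' => h.trans h'⟩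

noncomputable def cycleCount {n : ℕ} (π : Equiv.Perm (Fin n)) : ℕ :=
  Nat.card (Quotient (orbitSetoid π))

noncomputable def pLen {n : ℕ} (V : Setoid (Fin n)) : ℤ :=
  (n : ℤ) - Nat.card (Quotient V)

noncomputable def permLen {n : ℕ} (π : Equiv.Perm (Fin n)) : ℤ :=
  (n : ℤ) - cycleCount π

theorem orbitSetoid_mul_le {α : Type*} (π σ : Equiv.Perm α) :
    orbitSetoid (π * σ) ≤ orbitSetoid π ⊔ orbitSetoid σ := by
  set S := orbitSetoid π ⊔ orbitSetoid σ with hS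
  have hstep : ∀ x, S x ((π * σ) x) := by
    intro x
    have h1 : S x (σ x) := Setoid.le_def.mp le_sup_right ⟨1, by simp⟩
    have h2 : S (σ x) (π (σ x)) := Setoid.le_def.mp le_sup_left ⟨1, by simp⟩
    exact S.iseqv.trans h1 h2
  have hpow : ∀ (k : ℤ) (x : α), S x (((π * σ) ^ k) x) := by
    intro k
    induction k using Int.induction_on with
    | zero => intro x; simpa using S.iseqv.refl x
    | succ k ih =>
        intro x
        have h : ((π * σ) ^ ((k : ℤ) + 1)) x = ((π * σ) ^ (k : ℤ)) ((π * σ) x) := by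
          rw [zpow_add_one]
          simp [Equiv.Perm.mul_apply]
        rw [h]
        exact S.iseqv.trans (hstep x) (ih ((π * σ) x))
    | pred k ih =>
        intro x
        have h : ((π * σ) ^ (-(k : ℤ) - 1)) x = ((π * σ) ^ (-(k : ℤ))) ((π * σ)⁻¹ x) := by
          rw [zpow_sub_one]
          simp [Equiv.Perm.mul_apply]
        rw [h]
        have hinv : S x ((π * σ)⁻¹ x) := by
          have h2 := hstep ((π * σ)⁻¹ x)
          simp only [Equiv.Perm.coe_inv, Equiv.apply_symm_apply] at h2
          exact S.iseqv.symm h2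
        exact S.iseqv.trans hinv (ih ((π * σ)⁻¹ x))
  rw [Setoid.le_def]
  rintro x y ⟨k, hk⟩
  exact hk ▸ hpow k x

set_option linter.unusedSectionVars false

section PartCount

abbrev Setoid.Rel {β : Type*} (S : Setoid β) : β → β → Prop := S.r

variable {α : Type*}

/-- The setoid identifying exactly `a` and `b`. -/
def pairSetoid (a b : α) : Setoid α where
  r u v := u = v ∨ (u = a ∧ v = b) ∨ (u = b ∧ v = a)
  iseqv := by
    refine ⟨fun x => Or.inl rfl, ?_, ?_⟩
    · rintro x y (h | ⟨h1, h2⟩ | ⟨h1, h2⟩) <;> subst_vars <;> tauto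
    · rintro x y z (h | ⟨h1, h2⟩ | ⟨h1, h2⟩) (h' | ⟨h1', h2'⟩ | ⟨h1', h2'⟩) <;> subst_vars <;> tauto

theorem pairSetoid_rel_left (a b : α) : (pairSetoid a b).Rel a b :=
  Or.inr (Or.inl ⟨rfl, rfl⟩)

theorem pairSetoid_le {a b : α} {S : Setoid α} (h : S.Rel a b) : pairSetoid a b ≤ S := by
  rw [Setoid.le_def]
  rintro x y (rfl | ⟨rfl, rfl⟩ | ⟨rfl, rfl⟩)
  · exact S.refl x
  · exact h
  · exact S.symm h

theorem relSymm {α : Type*} {S : Setoid α} {u v : α} (h : S.Rel u v) : S.Rel v u :=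
  S.iseqv.symm h

theorem relTrans {α : Type*} {S : Setoid α} {u v w : α} (h : S.Rel u v) (h' : S.Rel v w) :
    S.Rel u w := S.iseqv.trans h h'

theorem relRefl {α : Type*} (S : Setoid α) (u : α) : S.Rel u u := S.iseqv.refl u

/-- number of classes -/
noncomputable def Nc (S : Setoid α) : ℕ := Nat.card (Quotient S)

theorem sup_pair_rel (S : Setoid α) (a b u v : α) :
    (S ⊔ pairSetoid a b).Rel u v ↔
      S.Rel u v ∨ (S.Rel u a ∧ S.Rel b v) ∨ (S.Rel u b ∧ S.Rel a v) := by
  set R : Setoid α :=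
    { r := fun u v => S.Rel u v ∨ (S.Rel u a ∧ S.Rel b v) ∨ (S.Rel u b ∧ S.Rel a v)
      iseqv := by
        refine ⟨fun x => Or.inl (S.refl x), ?_, ?_⟩
        · rintro x y (h | ⟨h1, h2⟩ | ⟨h1, h2⟩)
          · exact Or.inl (S.symm h)
          · exact Or.inr (Or.inr ⟨S.symm h2, S.symm h1⟩)
          · exact Or.inr (Or.inl ⟨S.symm h2, S.symm h1⟩)
        · rintro x y z (h | ⟨h1, h2⟩ | ⟨h1, h2⟩) (h' | ⟨h1', h2'⟩ | ⟨h1', h2'⟩)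
          · exact Or.inl (S.trans h h')
          · exact Or.inr (Or.inl ⟨S.trans h h1', h2'⟩)
          · exact Or.inr (Or.inr ⟨S.trans h h1', h2'⟩)
          · exact Or.inr (Or.inl ⟨h1, S.trans h2 h'⟩)
          · exact Or.inl (S.trans h1 (S.trans (S.symm (S.trans h2 h1')) h2'))
          · exact Or.inl (S.trans h1 h2')
          · exact Or.inr (Or.inr ⟨h1, S.trans h2 h'⟩)
          · exact Or.inl (S.trans h1 h2')
          · exact Or.inr (Or.inr ⟨h1, h2'⟩) } with hR
  have : S ⊔ pairSetoid a b = R := by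
    apply le_antisymm
    · apply sup_le
      · rw [Setoid.le_def]; intro x y h; exact Or.inl h
      · rw [Setoid.le_def]
        rintro x y (rfl | ⟨rfl, rfl⟩ | ⟨rfl, rfl⟩)
        · exact R.refl x
        · exact Or.inr (Or.inl ⟨S.refl _, S.refl _⟩)
        · exact Or.inr (Or.inr ⟨S.refl _, S.refl _⟩)
    · rw [Setoid.le_def]
      have hS : S ≤ S ⊔ pairSetoid a b := le_sup_left
      have hP : pairSetoid a b ≤ S ⊔ pairSetoid a b := le_sup_right
      rintro x y (h | ⟨h1, h2⟩ | ⟨h1, h2⟩)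
      · exact hS h
      · exact (S ⊔ pairSetoid a b).trans (hS h1)
          ((S ⊔ pairSetoid a b).trans (hP (pairSetoid_rel_left a b)) (hS h2))
      · exact (S ⊔ pairSetoid a b).trans (hS h1)
          ((S ⊔ pairSetoid a b).trans ((S ⊔ pairSetoid a b).symm
            (hP (pairSetoid_rel_left a b))) (hS h2))
  rw [this]
  rfl

theorem sup_pair_eq_self {S : Setoid α} {a b : α} (h : S.Rel a b) :
    S ⊔ pairSetoid a b = S :=
  sup_eq_left.mpr (pairSetoid_le h)

theorem Nc_merge [Finite α] {S : Setoid α} {a b : α} (hab : ¬ S.Rel a b) :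
    Nc (S ⊔ pairSetoid a b) + 1 = Nc S := by
  classical
  have hSab : Quotient.mk S a ≠ Quotient.mk S b := fun h => hab (Quotient.exact h)
  let f : α → {c : Quotient S // c ≠ Quotient.mk S b} := fun u =>
    if h : S.Rel u b then ⟨Quotient.mk S a, hSab⟩
    else ⟨Quotient.mk S u, fun hc => h (Quotient.exact hc)⟩
  have hf : ∀ u v, (S ⊔ pairSetoid a b).Rel u v → f u = f v := by
    intro u v huv
    rw [sup_pair_rel] at huv
    rcases huv with h | ⟨h1, h2⟩ | ⟨h1, h2⟩
    · by_cases hub : S.Rel u b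
      · have hvb : S.Rel v b := S.trans (S.symm h) hub
        simp only [f, dif_pos hub, dif_pos hvb]
      · have hvb : ¬ S.Rel v b := fun hh => hub (S.trans h hh)
        simp only [f, dif_neg hub, dif_neg hvb]
        exact Subtype.ext (Quotient.sound h)
    · have hub : ¬ S.Rel u b := fun hh => hab (S.trans (S.symm h1) hh)
      have hvb : S.Rel v b := S.symm h2
      simp only [f, dif_pos hvb, dif_neg hub]
      exact Subtype.ext (Quotient.sound h1)
    · have hub : S.Rel u b := h1
      have hvb : ¬ S.Rel v b := fun hh => hab (S.trans h2 hh)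
      simp only [f, dif_pos hub, dif_neg hvb]
      exact Subtype.ext (Quotient.sound h2)
  have hle : S ≤ S ⊔ pairSetoid a b := le_sup_left
  let e : Quotient (S ⊔ pairSetoid a b) ≃ {c : Quotient S // c ≠ Quotient.mk S b} :=
    { toFun := Quotient.lift f hf
      invFun := fun c => Quotient.lift (fun u => Quotient.mk _ u)
        (fun u v h => Quotient.sound (hle h)) c.1
      left_inv := by
        rintro ⟨u⟩
        change Quotient.lift _ _ ((f u).1) = Quotient.mk _ u
        by_cases h : S.Rel u b
        · simp only [f, dif_pos h]
          change Quotient.mk _ a = Quotient.mk _ u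
          exact Quotient.sound ((sup_pair_rel S a b a u).mpr
            (Or.inr (Or.inl ⟨relRefl S a, relSymm h⟩)))
        · simp only [f, dif_neg h]
          rfl
      right_inv := by
        rintro ⟨c, hc⟩
        induction c using Quotient.ind with
        | _ u =>
          have h : ¬ S.Rel u b := fun hh => hc (Quotient.sound hh)
          change Quotient.lift f hf (Quotient.mk _ u) = _
          simp only [Quotient.lift_mk, f, dif_neg h] }
  have h1 : Nc (S ⊔ pairSetoid a b) = Nat.card {c : Quotient S // c ≠ Quotient.mk S b} :=
    Nat.card_congr e
  have h2 : Nc S = Nat.card {c : Quotient S // c ≠ Quotient.mk S b} + 1 := by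
    have := Nat.card_congr (Equiv.optionSubtypeNe (Quotient.mk S b)).symm
    rw [Nc, this, Finite.card_option]
  omega

theorem Nc_le_sup_pair_add_one [Finite α] (S : Setoid α) (a b : α) :
    Nc S ≤ Nc (S ⊔ pairSetoid a b) + 1 := by
  by_cases h : S.Rel a b
  · rw [sup_pair_eq_self h]; omega
  · exact (Nc_merge h).ge

theorem Nc_le_of_le [Finite α] {S T : Setoid α} (h : S ≤ T) : Nc T ≤ Nc S := by
  apply Nat.card_le_card_of_surjective
    (Quotient.map' (fun x => x) (fun u v hr => h hr) : Quotient S → Quotient T)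
  rintro ⟨u⟩
  exact ⟨Quotient.mk S u, rfl⟩

theorem Nc_le_card [Finite α] (S : Setoid α) : Nc S ≤ Nat.card α :=
  Nat.card_le_card_of_surjective (Quotient.mk S) (fun q => Quotient.exists_rep q)

theorem Nc_exchange [Finite α] (B : Setoid α) :
    ∀ (k : ℕ) (A A' : Setoid α), A ≤ A' → Nc A ≤ k →
      Nc A' + Nc (A ⊔ B) ≤ Nc A + Nc (A' ⊔ B) := by
  intro k
  induction k with
  | zero =>
    intro A A' hle hk
    by_cases heq : A = A'
    · subst heq; omega
    · have hne : ¬ ∀ x y, A'.Rel x y → A.Rel x y := by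
        intro h
        exact heq (le_antisymm hle (Setoid.le_def.mpr (fun {x y} h' => h x y h')))
      push_neg at hne
      obtain ⟨x, y, hxy', hxy⟩ := hne
      have h1 := Nc_merge hxy
      omega
  | succ k ih =>
    intro A A' hle hk
    by_cases heq : A = A'
    · subst heq; omega
    · have hne : ¬ ∀ x y, A'.Rel x y → A.Rel x y := by
        intro h
        exact heq (le_antisymm hle (Setoid.le_def.mpr (fun {x y} h' => h x y h')))
      push_neg at hne
      obtain ⟨x, y, hxy', hxy⟩ := hne
      have h1 := Nc_merge hxy
      have h2 : A ⊔ pairSetoid x y ≤ A' := sup_le hle (pairSetoid_le hxy')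
      have h3 : (A ⊔ pairSetoid x y) ⊔ B = (A ⊔ B) ⊔ pairSetoid x y := sup_right_comm A (pairSetoid x y) B
      have h4 : Nc (A ⊔ B) ≤ Nc ((A ⊔ pairSetoid x y) ⊔ B) + 1 := by
        rw [h3]; exact Nc_le_sup_pair_add_one (A ⊔ B) x y
      have h5 := ih (A ⊔ pairSetoid x y) A' h2 (by omega)
      omega

end PartCount

section PermSide

variable {α : Type*} [Finite α] [DecidableEq α]

theorem orbitSetoid_one : orbitSetoid (1 : Perm α) = ⊥ := by
  ext x y
  change (1 : Perm α).SameCycle x y ↔ _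
  rw [Setoid.bot_def]
  exact Equiv.Perm.sameCycle_one

theorem swap_zpow {a b : α} (k : ℤ) :
    (swap a b : Perm α) ^ k = 1 ∨ (swap a b : Perm α) ^ k = swap a b := by
  induction k using Int.induction_on with
  | zero => left; rfl
  | succ k ih =>
    rcases ih with h | h
    · right; rw [zpow_add_one, h, one_mul]
    · left; rw [zpow_add_one, h, swap_mul_self]
  | pred k ih =>
    rcases ih with h | h
    · right; rw [zpow_sub_one, h, one_mul, swap_inv]
    · left; rw [zpow_sub_one, h, swap_inv, swap_mul_self]

theorem orbit_swap_le_pair (a b : α) : orbitSetoid (swap a b) ≤ pairSetoid a b := by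
  rw [Setoid.le_def]
  rintro x y ⟨k, hk⟩
  rcases swap_zpow (a := a) (b := b) k with h | h <;> rw [h] at hk
  · left; simpa using hk
  · rcases eq_or_ne x a with rfl | hxa
    · rw [swap_apply_left] at hk; right; left; exact ⟨rfl, hk.symm⟩
    · rcases eq_or_ne x b with rfl | hxb
      · rw [swap_apply_right] at hk; right; right; exact ⟨rfl, hk.symm⟩
      · rw [swap_apply_of_ne_of_ne hxa hxb] at hk; left; exact hk

theorem orbit_mul_swap_sup_pair (ρ : Perm α) (a b : α) :
    orbitSetoid (ρ * swap a b) ⊔ pairSetoid a b = orbitSetoid ρ ⊔ pairSetoid a b := by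
  have key : ∀ τ : Perm α, orbitSetoid (τ * swap a b) ⊔ pairSetoid a b ≤
      orbitSetoid τ ⊔ pairSetoid a b := by
    intro τ
    apply sup_le _ le_sup_right
    calc orbitSetoid (τ * swap a b) ≤ orbitSetoid τ ⊔ orbitSetoid (swap a b) :=
          orbitSetoid_mul_le τ (swap a b)
      _ ≤ orbitSetoid τ ⊔ pairSetoid a b := sup_le_sup_left (orbit_swap_le_pair a b) _
  apply le_antisymm (key ρ)
  have h : ρ = (ρ * swap a b) * swap a b := by rw [mul_assoc, swap_mul_self, mul_one]
  calc orbitSetoid ρ ⊔ pairSetoid a b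
      = orbitSetoid ((ρ * swap a b) * swap a b) ⊔ pairSetoid a b := by rw [← h]
    _ ≤ orbitSetoid (ρ * swap a b) ⊔ pairSetoid a b := key _

theorem sameCycle_mul_swap_of_not {ρ : Perm α} {a b : α}
    (h : ¬ ρ.SameCycle a b) : (ρ * swap a b).SameCycle a b := by
  classical
  have hab : a ≠ b := fun e => h (e ▸ Equiv.Perm.SameCycle.refl ρ a)
  have hex : ∃ j, 0 < j ∧ (ρ ^ j) b = b :=
    ⟨orderOf ρ, orderOf_pos ρ, by rw [pow_orderOf_eq_one]; rfl⟩
  set m := Nat.find hex with hm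
  obtain ⟨hm0, hmb⟩ : 0 < m ∧ (ρ ^ m) b = b := Nat.find_spec hex
  have hmin : ∀ j, 0 < j → j < m → (ρ ^ j) b ≠ b := by
    intro j hj hjm hc
    exact Nat.find_min hex hjm ⟨hj, hc⟩
  have hnota : ∀ j : ℕ, (ρ ^ j) b ≠ a := by
    intro j hc
    exact h (Equiv.Perm.SameCycle.symm ⟨(j : ℤ), by rw [zpow_natCast]; exact hc⟩)
  have claim : ∀ j, 0 < j → j ≤ m → ((ρ * swap a b) ^ j) a = (ρ ^ j) b := by
    intro j
    induction j with
    | zero => intro h0; omega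
    | succ j ih =>
      intro _ hjm
      rcases Nat.eq_zero_or_pos j with rfl | hj
      · simp [pow_succ', swap_apply_left]
      · have hb' : (ρ ^ j) b ≠ b := hmin j hj (by omega)
        have ha' : (ρ ^ j) b ≠ a := hnota j
        rw [pow_succ', Equiv.Perm.mul_apply, ih hj (by omega), pow_succ',
          Equiv.Perm.mul_apply, Equiv.Perm.mul_apply, swap_apply_of_ne_of_ne ha' hb']
  exact ⟨(m : ℤ), by rw [zpow_natCast, claim m hm0 le_rfl, hmb]⟩

theorem not_sameCycle_mul_swap {ρ : Perm α} {a b : α}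
    (hab : a ≠ b) (h : ρ.SameCycle a b) : ¬ (ρ * swap a b).SameCycle a b := by
  classical
  obtain ⟨i, _, hib⟩ := h.exists_pow_eq'
  have hi0 : 0 < i := by
    rcases Nat.eq_zero_or_pos i with rfl | hi
    · exact absurd hib hab
    · exact hi
  have hex : ∃ j, 0 < j ∧ (ρ ^ j) a = b := ⟨i, hi0, hib⟩
  set m := Nat.find hex with hm
  obtain ⟨hm0, hmb⟩ : 0 < m ∧ (ρ ^ m) a = b := Nat.find_spec hex
  have hmin : ∀ j, 0 < j → j < m → (ρ ^ j) a ≠ b := by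
    intro j hj hjm hc
    exact Nat.find_min hex hjm ⟨hj, hc⟩
  have hne : ∀ j, 0 < j → j < m → (ρ ^ j) a ≠ a ∧ (ρ ^ j) a ≠ b := by
    intro j hj hjm
    refine ⟨?_, hmin j hj hjm⟩
    intro hc
    have h2 : (ρ ^ (m - j)) a = b := by
      have : (ρ ^ (m - j)) ((ρ ^ j) a) = (ρ ^ m) a := by
        rw [← Equiv.Perm.mul_apply, ← pow_add]
        congr 2
        omega
      rw [hc] at this
      rw [this, hmb]
    exact hmin (m - j) (by omega) (by omega) h2
  set ρ' := ρ * swap a b with hρ'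
  set T : Set α := {x | x = b ∨ ∃ j, 0 < j ∧ j < m ∧ (ρ ^ j) a = x} with hT
  have hstep : ∀ x ∈ T, ρ' x ∈ T := by
    rintro x (rfl | ⟨j, hj0, hjm, rfl⟩)
    · have : ρ' x = ρ a := by rw [hρ', Equiv.Perm.mul_apply, swap_apply_right]
      rw [this]
      rcases Nat.lt_or_ge 1 m with h1 | h1
      · exact Or.inr ⟨1, one_pos, h1, by rw [pow_one]⟩
      · have : m = 1 := by omega
        left
        rw [← pow_one ρ, ← this, hmb]
    · have hxa := (hne j hj0 hjm).1
      have hxb := (hne j hj0 hjm).2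
      have : ρ' ((ρ ^ j) a) = (ρ ^ (j + 1)) a := by
        rw [hρ', Equiv.Perm.mul_apply, swap_apply_of_ne_of_ne hxa hxb, pow_succ',
          Equiv.Perm.mul_apply]
      rw [this]
      rcases Nat.lt_or_ge (j + 1) m with h1 | h1
      · exact Or.inr ⟨j + 1, by omega, h1, rfl⟩
      · have : j + 1 = m := by omega
        left
        rw [this, hmb]
  have hbT : b ∈ T := Or.inl rfl
  have haT : a ∉ T := by
    rintro (h1 | ⟨j, hj0, hjm, hj⟩)
    · exact hab h1
    · exact (hne j hj0 hjm).1 hj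
  have hpow : ∀ k : ℕ, (ρ' ^ k) b ∈ T := by
    intro k
    induction k with
    | zero => exact hbT
    | succ k ih =>
      rw [pow_succ', Equiv.Perm.mul_apply]
      exact hstep _ ih
  intro hsc
  obtain ⟨k, _, hk⟩ := hsc.symm.exists_pow_eq'
  exact haT (hk ▸ hpow k)

end PermSide

section Genus

variable {α : Type*} [Finite α] [DecidableEq α]

theorem Nc_orbit_mul_swap_of_not {ρ : Perm α} {a b : α}
    (h : ¬ ρ.SameCycle a b) :
    Nc (orbitSetoid (ρ * swap a b)) + 1 = Nc (orbitSetoid ρ) := by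
  have h1 : orbitSetoid (ρ * swap a b) = orbitSetoid ρ ⊔ pairSetoid a b := by
    have hp : pairSetoid a b ≤ orbitSetoid (ρ * swap a b) :=
      pairSetoid_le (sameCycle_mul_swap_of_not h)
    rw [← sup_eq_left.mpr hp]
    exact orbit_mul_swap_sup_pair ρ a b
  rw [h1]
  exact Nc_merge h

theorem Nc_orbit_mul_swap_of {ρ : Perm α} {a b : α}
    (hab : a ≠ b) (h : ρ.SameCycle a b) :
    Nc (orbitSetoid (ρ * swap a b)) = Nc (orbitSetoid ρ) + 1 := by
  have h2 := not_sameCycle_mul_swap hab h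
  have h3 := Nc_orbit_mul_swap_of_not (ρ := ρ * swap a b) (a := a) (b := b) h2
  rw [mul_assoc, swap_mul_self, mul_one] at h3
  omega

theorem genus_aux :
    ∀ (k : ℕ) (π σ : Perm α), Nat.card α - Nc (orbitSetoid σ) ≤ k →
      Nc (orbitSetoid π) + Nc (orbitSetoid σ) + Nc (orbitSetoid (π * σ)) ≤
        Nat.card α + 2 * Nc (orbitSetoid π ⊔ orbitSetoid σ) := by
  intro k
  induction k with
  | zero =>
    intro π σ hk
    by_cases hσ : σ = 1
    · subst hσ
      rw [orbitSetoid_one, mul_one, sup_bot_eq]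
      have : Nc (⊥ : Setoid α) = Nat.card α := by
        rw [Nc]
        apply Nat.card_congr
        refine ⟨Quotient.lift (fun x => x) (fun u v h => ?_), Quotient.mk _, ?_, fun x => rfl⟩
        · have h2 : (⇑(⊥ : Setoid α)) u v := h
          rwa [Setoid.bot_def] at h2
        · rintro ⟨u⟩; rfl
      omega
    · obtain ⟨a, ha⟩ : ∃ a, σ a ≠ a := by
        by_contra hc
        push_neg at hc
        exact hσ (Equiv.ext hc)
      set b := σ a with hb
      have hab : a ≠ b := fun e => ha e.symm
      have hsc : σ.SameCycle a b := ⟨1, by rw [zpow_one]⟩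
      have hsplit := Nc_orbit_mul_swap_of hab hsc
      have hle := Nc_le_card (orbitSetoid (σ * swap a b))
      omega
  | succ k ih =>
    intro π σ hk
    by_cases hσ : σ = 1
    · subst hσ
      rw [orbitSetoid_one, mul_one, sup_bot_eq]
      have : Nc (⊥ : Setoid α) = Nat.card α := by
        rw [Nc]
        apply Nat.card_congr
        refine ⟨Quotient.lift (fun x => x) (fun u v h => ?_), Quotient.mk _, ?_, fun x => rfl⟩
        · have h2 : (⇑(⊥ : Setoid α)) u v := h
          rwa [Setoid.bot_def] at h2
        · rintro ⟨u⟩; rfl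
      omega
    · obtain ⟨a, ha⟩ : ∃ a, σ a ≠ a := by
        by_contra hc
        push_neg at hc
        exact hσ (Equiv.ext hc)
      set b := σ a with hb
      have hab : a ≠ b := fun e => ha e.symm
      have hsc : σ.SameCycle a b := ⟨1, by rw [zpow_one]⟩
      set σ' := σ * swap a b with hσ'
      have hsplit : Nc (orbitSetoid σ') = Nc (orbitSetoid σ) + 1 :=
        Nc_orbit_mul_swap_of hab hsc
      have horb : orbitSetoid σ' ⊔ pairSetoid a b = orbitSetoid σ := by
        rw [orbit_mul_swap_sup_pair]
        exact sup_pair_eq_self (S := orbitSetoid σ) hsc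
      have hσeq : σ = σ' * swap a b := by rw [hσ', mul_assoc, swap_mul_self, mul_one]
      have hπσ : π * σ = (π * σ') * swap a b := by rw [mul_assoc, ← hσeq]
      have hcard := Nc_le_card (orbitSetoid σ')
      have IH := ih π σ' (by omega)
      by_cases hrel : (orbitSetoid π ⊔ orbitSetoid σ').Rel a b
      · have hsup : orbitSetoid π ⊔ orbitSetoid σ = orbitSetoid π ⊔ orbitSetoid σ' := by
          conv_lhs => rw [← horb, ← sup_assoc]
          exact sup_pair_eq_self hrel
        have hbnd : Nc (orbitSetoid (π * σ)) ≤ Nc (orbitSetoid (π * σ')) + 1 := by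
          by_cases hc : (π * σ').SameCycle a b
          · rw [hπσ, Nc_orbit_mul_swap_of hab hc]
          · have := Nc_orbit_mul_swap_of_not (ρ := π * σ') hc
            rw [hπσ]
            omega
        rw [hsup]
        omega
      · have hnc : ¬ (π * σ').SameCycle a b := fun hc => hrel (orbitSetoid_mul_le π σ' hc)
        have hbnd : Nc (orbitSetoid (π * σ)) + 1 = Nc (orbitSetoid (π * σ')) := by
          rw [hπσ]
          exact Nc_orbit_mul_swap_of_not hnc
        have hm : Nc (orbitSetoid π ⊔ orbitSetoid σ) + 1
            = Nc (orbitSetoid π ⊔ orbitSetoid σ') := by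
          have heq : orbitSetoid π ⊔ orbitSetoid σ
              = (orbitSetoid π ⊔ orbitSetoid σ') ⊔ pairSetoid a b := by
            rw [← horb, ← sup_assoc]
          rw [heq]
          exact Nc_merge hrel
        omega

theorem genus (π σ : Perm α) :
    Nc (orbitSetoid π) + Nc (orbitSetoid σ) + Nc (orbitSetoid (π * σ)) ≤
      Nat.card α + 2 * Nc (orbitSetoid π ⊔ orbitSetoid σ) :=
  genus_aux _ π σ le_rfl

end Genus


/-- A partitioned permutation: a pair `(𝒱, π)` with `𝒱` a partition of `{1,…,n}`
(encoded as a setoid on `Fin n`) coarser than the orbit partition of `π`. -/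
structure PartitionedPerm (n : ℕ) where
  part : Setoid (Fin n)
  perm : Equiv.Perm (Fin n)
  hle : orbitSetoid perm ≤ part

/-- The length `|(𝒱,π)| := 2|𝒱| − |π|` of a partitioned permutation. -/
noncomputable def ppLen {n : ℕ} (a : PartitionedPerm n) : ℤ :=
  2 * pLen a.part - permLen a.perm

/-- The product of partitioned permutations: `(𝒱,π)·(𝒲,σ) = (𝒱∨𝒲, πσ)` if the
lengths add up, and `0` (here: `none`) otherwise. -/
noncomputable def ppMul {n : ℕ} (a b : PartitionedPerm n) : Option (PartitionedPerm n) :=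
  if ppLen a + ppLen b = 2 * pLen (a.part ⊔ b.part) - permLen (a.perm * b.perm)
  then some ⟨a.part ⊔ b.part, a.perm * b.perm,
        le_trans (orbitSetoid_mul_le a.perm b.perm) (sup_le_sup a.hle b.hle)⟩
  else none

/-- The CMSS triangle inequality. -/
theorem pp_triangle {n : ℕ} (V W : Setoid (Fin n)) (π σ : Perm (Fin n))
    (hV : orbitSetoid π ≤ V) (hW : orbitSetoid σ ≤ W) :
    2 * pLen (V ⊔ W) - permLen (π * σ) ≤
      (2 * pLen V - permLen π) + (2 * pLen W - permLen σ) := by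
  have hcard : Nat.card (Fin n) = n := Nat.card_eq_fintype_card.trans (Fintype.card_fin n)
  have g := genus π σ
  rw [hcard] at g
  have e1 : Nc V + Nc (orbitSetoid π ⊔ orbitSetoid σ) ≤
      Nc (orbitSetoid π) + Nc (V ⊔ orbitSetoid σ) :=
    Nc_exchange (orbitSetoid σ) (Nc (orbitSetoid π)) (orbitSetoid π) V hV le_rfl
  have e2 : Nc W + Nc (orbitSetoid σ ⊔ V) ≤
      Nc (orbitSetoid σ) + Nc (W ⊔ V) :=
    Nc_exchange V (Nc (orbitSetoid σ)) (orbitSetoid σ) W hW le_rfl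
  rw [sup_comm (orbitSetoid σ) V] at e2
  rw [sup_comm W V] at e2
  have c1 := Nc_le_card V
  have c2 := Nc_le_card W
  have c3 := Nc_le_card (V ⊔ W)
  have c4 := Nc_le_card (orbitSetoid (π * σ))
  have c5 := Nc_le_card (orbitSetoid π)
  have c6 := Nc_le_card (orbitSetoid σ)
  rw [hcard] at c1 c2 c3 c4 c5 c6
  simp only [pLen, permLen, cycleCount]
  simp only [Nc] at g e1 e2 c1 c2 c3 c4 c5 c6
  push_cast
  omega

theorem PartitionedPerm.ext' {n : ℕ} {x y : PartitionedPerm n}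
    (h1 : x.part = y.part) (h2 : x.perm = y.perm) : x = y := by
  cases x; cases y
  simp only at h1 h2
  subst h1; subst h2
  rfl


/-- The multiplication of partitioned permutations (with value `0`, i.e. `none`, when the
lengths do not add) is associative:
`((𝒱,π)·(𝒲,σ))·(𝒰,τ) = (𝒱,π)·((𝒲,σ)·(𝒰,τ))`. -/
theorem ppMul_assoc {n : ℕ} (a b c : PartitionedPerm n) :
    (ppMul a b).bind (fun x => ppMul x c) = (ppMul b c).bind (fun x => ppMul a x) := by
  have hbc_le : orbitSetoid (b.perm * c.perm) ≤ b.part ⊔ c.part :=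
    le_trans (orbitSetoid_mul_le b.perm c.perm) (sup_le_sup b.hle c.hle)
  have hab_le : orbitSetoid (a.perm * b.perm) ≤ a.part ⊔ b.part :=
    le_trans (orbitSetoid_mul_le a.perm b.perm) (sup_le_sup a.hle b.hle)
  have tri_ab : 2 * pLen (a.part ⊔ b.part) - permLen (a.perm * b.perm) ≤ ppLen a + ppLen b :=
    pp_triangle a.part b.part a.perm b.perm a.hle b.hle
  have tri_bc : 2 * pLen (b.part ⊔ c.part) - permLen (b.perm * c.perm) ≤ ppLen b + ppLen c :=
    pp_triangle b.part c.part b.perm c.perm b.hle c.hle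
  have tri_a_bc : 2 * pLen (a.part ⊔ (b.part ⊔ c.part)) - permLen (a.perm * (b.perm * c.perm)) ≤
      ppLen a + (2 * pLen (b.part ⊔ c.part) - permLen (b.perm * c.perm)) :=
    pp_triangle a.part (b.part ⊔ c.part) a.perm (b.perm * c.perm) a.hle hbc_le
  have tri_ab_c : 2 * pLen ((a.part ⊔ b.part) ⊔ c.part) - permLen ((a.perm * b.perm) * c.perm) ≤
      (2 * pLen (a.part ⊔ b.part) - permLen (a.perm * b.perm)) + ppLen c :=
    pp_triangle (a.part ⊔ b.part) c.part (a.perm * b.perm) c.perm hab_le c.hle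
  by_cases h1 : ppLen a + ppLen b = 2 * pLen (a.part ⊔ b.part) - permLen (a.perm * b.perm)
  · by_cases h2 : ppLen b + ppLen c = 2 * pLen (b.part ⊔ c.part) - permLen (b.perm * c.perm)
    · rw [ppMul, if_pos h1, ppMul, if_pos h2, Option.bind_some, Option.bind_some]
      rw [ppMul, ppMul]
      simp only [ppLen]
      have hQ : (2 * pLen (a.part ⊔ b.part) - permLen (a.perm * b.perm) +
            (2 * pLen c.part - permLen c.perm) =
            2 * pLen ((a.part ⊔ b.part) ⊔ c.part) - permLen ((a.perm * b.perm) * c.perm)) ↔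
          (2 * pLen a.part - permLen a.perm +
            (2 * pLen (b.part ⊔ c.part) - permLen (b.perm * c.perm)) =
            2 * pLen (a.part ⊔ (b.part ⊔ c.part)) - permLen (a.perm * (b.perm * c.perm))) := by
        rw [sup_assoc, mul_assoc]
        constructor <;> intro h <;> [skip; skip] <;>
          · have h1' := h1
            have h2' := h2
            simp only [ppLen] at h1' h2'
            omega
      by_cases hq : 2 * pLen (a.part ⊔ b.part) - permLen (a.perm * b.perm) +
          (2 * pLen c.part - permLen c.perm) =
          2 * pLen ((a.part ⊔ b.part) ⊔ c.part) - permLen ((a.perm * b.perm) * c.perm)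
      · refine (if_pos hq).trans (Eq.trans ?_ (if_pos (hQ.mp hq)).symm)
        congr 1
        exact PartitionedPerm.ext' (sup_assoc _ _ _) (mul_assoc _ _ _)
      · exact (if_neg hq).trans (if_neg (fun h => hq (hQ.mpr h))).symm
    · rw [ppMul, if_pos h1, ppMul, if_neg h2, Option.bind_some, Option.bind_none]
      rw [ppMul]
      rw [if_neg]
      intro hq
      simp only [ppLen] at hq h1 ⊢
      apply h2
      simp only [ppLen]
      have hq' : ppLen a + ppLen b + (2 * pLen c.part - permLen c.perm) =
          2 * pLen (a.part ⊔ (b.part ⊔ c.part)) - permLen (a.perm * (b.perm * c.perm)) := by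
        simp only [ppLen]
        rw [← sup_assoc, ← mul_assoc]
        omega
      simp only [ppLen] at hq' tri_bc tri_a_bc ⊢
      omega
  · by_cases h2 : ppLen b + ppLen c = 2 * pLen (b.part ⊔ c.part) - permLen (b.perm * c.perm)
    · rw [ppMul, if_neg h1, ppMul, if_pos h2, Option.bind_none, Option.bind_some]
      rw [ppMul]
      rw [if_neg]
      intro hq
      apply h1
      simp only [ppLen] at hq h2 ⊢
      have hq' : 2 * pLen a.part - permLen a.perm + (ppLen b + ppLen c) =
          2 * pLen ((a.part ⊔ b.part) ⊔ c.part) - permLen ((a.perm * b.perm) * c.perm) := by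
        simp only [ppLen]
        rw [sup_assoc, mul_assoc]
        omega
      simp only [ppLen] at hq' tri_ab tri_ab_c ⊢
      omega
    · rw [ppMul, if_neg h1, ppMul, if_neg h2, Option.bind_none, Option.bind_none]
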